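/- Let p be an odd prime, γ a fixed topological generator of 1+pℤ_p, A, N ∈ ℤ_p, n ≥ 1, and let ξ be a primitive p^n-th root of unity. Suppose φ ∈ ℤ_p[[X,Y]] (with coefficients in ℤ_p) is divisible in ℤ_p[ξ][[X,Y]] by γ^A(1+X)^N − ξ(1+Y). Then for every primitive p^n-th root of unity ξ', φ is divisible in ℤ_p[ξ][[X,Y]] by γ^A(1+X)^N − ξ'(1+Y). -/

import Mathlib

open scoped Classical

noncomputable section

/-- `γ^s` for `s ∈ ℤ_p`, defined by the binomial series `∑_k C(s,k) (γ-1)^k`. -/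
noncomputable def gpow (p : ℕ) [Fact p.Prime] (γ : ℤ_[p]) (s : ℤ_[p]) : ℤ_[p] :=
  ∑' k : ℕ, Ring.choose s k * (γ - 1) ^ k

/-- `γ` is a topological generator of the group `1 + pℤ_p`:  the closure of the set of
powers of `γ` is all of `1 + pℤ_p`. -/
def IsTopGen (p : ℕ) [Fact p.Prime] (γ : ℤ_[p]) : Prop :=
  closure (Set.range fun n : ℕ => γ ^ n) = {x : ℤ_[p] | ∃ y : ℤ_[p], x = 1 + p * y}

variable (p : ℕ) [Fact p.Prime]

variable (Ω : Type*) [NormedField Ω] [NormedAlgebra ℚ_[p] Ω] [IsUltrametricDist Ω]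
  [Algebra ℤ_[p] Ω] [IsScalarTower ℤ_[p] ℚ_[p] Ω]

/-- The two-variable power series `(1 + X_i)^N = ∑_k C(N,k) X_i^k` for `N ∈ ℤ_p`,
with coefficients in a `ℤ_p`-algebra `R`. -/
noncomputable def binomSer (R : Type*) [CommRing R] [Algebra ℤ_[p] R] (i : Fin 2)
    (N : ℤ_[p]) : MvPowerSeries (Fin 2) R :=
  fun d => if Finsupp.single i (d i) = d then algebraMap ℤ_[p] R (Ring.choose N (d i)) else 0

open Polynomial in
/-- The `p^n`-th cyclotomic polynomial is irreducible over `ℚ_p`, by Eisenstein's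
criterion applied over `ℤ_p` after the substitution `X ↦ X + 1`. -/
theorem cyclotomic_irreducible_padicAux {n : ℕ} (hn : 1 ≤ n) :
    Irreducible (Polynomial.cyclotomic (p ^ n) ℚ_[p]) := by
  obtain ⟨m, rfl⟩ : ∃ m, n = m + 1 := ⟨n - 1, (Nat.succ_pred_eq_of_pos hn).symm⟩
  have hprime : Prime (p : ℤ_[p]) := PadicInt.prime_p
  have hZ := cyclotomic_prime_pow_comp_X_add_one_isEisensteinAt p m
  set f : ℤ_[p][X] := Polynomial.cyclotomic (p ^ (m + 1)) ℤ_[p] with hf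
  have hfm : f.Monic := cyclotomic.monic _ _
  have hXadd : (X + 1 : ℤ_[p][X]) = X + C 1 := by simp
  have hgm : (f.comp (X + 1)).Monic := by
    rw [hXadd]
    exact hfm.comp (monic_X_add_C 1) (by rw [natDegree_X_add_C]; exact one_ne_zero)
  have hmap : f.comp (X + 1) =
      Polynomial.map (Int.castRingHom ℤ_[p]) ((cyclotomic (p ^ (m + 1)) ℤ).comp (X + 1)) := by
    rw [Polynomial.map_comp, map_cyclotomic, Polynomial.map_add, Polynomial.map_X,
      Polynomial.map_one]
  have hinj : Function.Injective (Int.castRingHom ℤ_[p]) := Int.cast_injective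
  have hdeg : (f.comp (X + 1)).natDegree =
      ((cyclotomic (p ^ (m + 1)) ℤ).comp (X + 1)).natDegree := by
    rw [hmap]
    exact natDegree_map_eq_of_injective hinj _
  have hEis : (f.comp (X + 1)).IsEisensteinAt (Ideal.span {(p : ℤ_[p])}) := by
    refine ⟨?_, ?_, ?_⟩
    · rw [hgm.leadingCoeff]
      intro h
      rw [Ideal.mem_span_singleton] at h
      exact hprime.not_unit (isUnit_of_dvd_one h)
    · intro i hi
      rw [hmap, coeff_map, Ideal.mem_span_singleton]
      have h2 := hZ.mem (by rwa [hdeg] at hi)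
      rw [Ideal.submodule_span_eq, Ideal.mem_span_singleton] at h2
      obtain ⟨c, hc⟩ := h2
      exact ⟨(c : ℤ_[p]), by rw [eq_intCast, hc]; push_cast; ring⟩
    · rw [coeff_zero_eq_eval_zero, eval_comp]
      simp only [eval_add, eval_X, eval_one, zero_add]
      rw [eval_one_cyclotomic_prime_pow]
      rw [Ideal.span_singleton_pow, Ideal.mem_span_singleton]
      rintro ⟨c, hc⟩
      rw [pow_two, mul_assoc] at hc
      nth_rw 1 [← mul_one (p : ℤ_[p])] at hc
      have := mul_left_cancel₀ hprime.ne_zero hc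
      exact hprime.not_unit (isUnit_of_dvd_one ⟨c, this⟩)
  have hdegpos : 0 < (f.comp (X + 1)).natDegree := by
    rw [hXadd, natDegree_comp, natDegree_X_add_C, mul_one, hf, natDegree_cyclotomic]
    exact Nat.totient_pos.mpr (pow_pos (Fact.out : p.Prime).pos _)
  have hgirr : Irreducible (f.comp (X + 1)) :=
    hEis.irreducible ((Ideal.span_singleton_prime hprime.ne_zero).2 hprime)
      hgm.isPrimitive hdegpos
  have hfirr : Irreducible f := by
    have h1 : f.comp (X + 1) = algEquivAevalXAddC (1 : ℤ_[p]) f := by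
      rw [hXadd, algEquivAevalXAddC_apply, Polynomial.comp_eq_aeval]
    have h2 : f = (algEquivAevalXAddC (1 : ℤ_[p])).symm (f.comp (X + 1)) := by
      rw [h1, AlgEquiv.symm_apply_apply]
    rw [h2]
    exact hgirr.map (f := ((algEquivAevalXAddC (1 : ℤ_[p])).symm : ℤ_[p][X] ≃* ℤ_[p][X]))
  have := (hfm.irreducible_iff_irreducible_map_fraction_map (K := ℚ_[p])).mp hfirr
  rwa [Polynomial.map_cyclotomic] at this

/-- Any two primitive `p^n`-th roots of unity inside `Ω` that lie in `ℤ_p[ξ]` are related by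
a `ℤ_p`-algebra endomorphism of `ℤ_p[ξ]` (Galois conjugation). -/
theorem exists_conj_endo
    [IsAlgClosed Ω] [Algebra.IsAlgebraic ℚ_[p] Ω]
    {n : ℕ} (hn : 1 ≤ n)
    (ξ : Ω) (hξ : IsPrimitiveRoot ξ (p ^ n))
    (ξ' : Algebra.adjoin ℤ_[p] ({ξ} : Set Ω)) (hξ' : IsPrimitiveRoot (ξ' : Ω) (p ^ n)) :
    ∃ τ : Algebra.adjoin ℤ_[p] ({ξ} : Set Ω) →ₐ[ℤ_[p]] Algebra.adjoin ℤ_[p] ({ξ} : Set Ω),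
      τ ⟨ξ, Algebra.self_mem_adjoin_singleton ℤ_[p] ξ⟩ = ξ' := by
  have hpn : 0 < p ^ n := pow_pos (Fact.out : p.Prime).pos n
  have hirr := cyclotomic_irreducible_padicAux p hn
  have hroot : Polynomial.aeval ξ (Polynomial.cyclotomic (p ^ n) ℚ_[p]) = 0 := by
    rw [Polynomial.aeval_def, ← Polynomial.eval_map, Polynomial.map_cyclotomic]
    exact hξ.isRoot_cyclotomic hpn
  have hmin : minpoly ℚ_[p] ξ = Polynomial.cyclotomic (p ^ n) ℚ_[p] :=
    (minpoly.eq_of_irreducible_of_monic hirr hroot (Polynomial.cyclotomic.monic _ _)).symm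
  have hroot' : Polynomial.aeval (ξ' : Ω) (minpoly ℚ_[p] ξ) = 0 := by
    rw [hmin, Polynomial.aeval_def, ← Polynomial.eval_map, Polynomial.map_cyclotomic]
    exact hξ'.isRoot_cyclotomic hpn
  obtain ⟨σ, hσ⟩ : ∃ σ : Ω →ₐ[ℚ_[p]] Ω, σ ξ = (ξ' : Ω) :=
    IntermediateField.exists_algHom_of_splits_of_aeval
      (fun s => ⟨(Algebra.IsAlgebraic.isAlgebraic s).isIntegral,
        IsAlgClosed.splits _⟩) hroot'
  set σ' : Ω →ₐ[ℤ_[p]] Ω := σ.restrictScalars ℤ_[p] with hσ'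
  have hmapsto : ∀ x ∈ Algebra.adjoin ℤ_[p] ({ξ} : Set Ω),
      σ' x ∈ Algebra.adjoin ℤ_[p] ({ξ} : Set Ω) := by
    intro x hx
    have h1 : σ' x ∈ (Algebra.adjoin ℤ_[p] ({ξ} : Set Ω)).map σ' :=
      Subalgebra.mem_map.mpr ⟨x, hx, rfl⟩
    rw [AlgHom.map_adjoin, Set.image_singleton] at h1
    have h2 : Algebra.adjoin ℤ_[p] ({σ' ξ} : Set Ω) ≤ Algebra.adjoin ℤ_[p] ({ξ} : Set Ω) := by
      apply Algebra.adjoin_le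
      rw [Set.singleton_subset_iff]
      show σ' ξ ∈ _
      have : σ' ξ = (ξ' : Ω) := hσ
      rw [this]
      exact ξ'.2
    exact h2 h1
  refine ⟨((σ'.comp (Algebra.adjoin ℤ_[p] ({ξ} : Set Ω)).val).codRestrict _
    (fun x => hmapsto _ x.2)), ?_⟩
  apply Subtype.ext
  exact hσ

/-- Let `p` be an odd prime, `γ` a topological generator of `1+pℤ_p`,
`A, N ∈ ℤ_p`, `n ≥ 1`, and `ξ` a primitive `p^n`-th root of unity.  If `φ ∈ ℤ_p[[X,Y]]`
is divisible in `ℤ_p[ξ][[X,Y]]` by `γ^A(1+X)^N - ξ(1+Y)`, then for every primitive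
`p^n`-th root of unity `ξ'`, `φ` is divisible in `ℤ_p[ξ][[X,Y]]` by
`γ^A(1+X)^N - ξ'(1+Y)`. -/
theorem statement13
    [IsAlgClosed Ω] [Algebra.IsAlgebraic ℚ_[p] Ω]
    (hp : Odd p) (γ : ℤ_[p]) (hγ : IsTopGen p γ)
    (A N : ℤ_[p]) (n : ℕ) (hn : 1 ≤ n)
    (ξ : Ω) (hξ : IsPrimitiveRoot ξ (p ^ n))
    (φ : MvPowerSeries (Fin 2) ℤ_[p])
    (hdvd : (MvPowerSeries.C (σ := Fin 2) (R := Algebra.adjoin ℤ_[p] ({ξ} : Set Ω))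
          (algebraMap ℤ_[p] _ (gpow p γ A)) * binomSer p _ 0 N -
        MvPowerSeries.C (σ := Fin 2) ⟨ξ, Algebra.self_mem_adjoin_singleton ℤ_[p] ξ⟩ *
          (1 + MvPowerSeries.X 1)) ∣
      MvPowerSeries.map (σ := Fin 2) (algebraMap ℤ_[p] (Algebra.adjoin ℤ_[p] ({ξ} : Set Ω))) φ) :
    ∀ ξ' : Algebra.adjoin ℤ_[p] ({ξ} : Set Ω), IsPrimitiveRoot (ξ' : Ω) (p ^ n) →
      (MvPowerSeries.C (σ := Fin 2) (R := Algebra.adjoin ℤ_[p] ({ξ} : Set Ω))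
          (algebraMap ℤ_[p] _ (gpow p γ A)) * binomSer p _ 0 N -
        MvPowerSeries.C (σ := Fin 2) ξ' * (1 + MvPowerSeries.X 1)) ∣
      MvPowerSeries.map (σ := Fin 2) (algebraMap ℤ_[p] (Algebra.adjoin ℤ_[p] ({ξ} : Set Ω))) φ := by
  intro ξ' hξ'
  obtain ⟨τ, hτ⟩ := exists_conj_endo p Ω hn ξ hξ ξ' hξ'
  have key := map_dvd (MvPowerSeries.map (σ := Fin 2) τ.toRingHom) hdvd
  have e1 : MvPowerSeries.map (σ := Fin 2) τ.toRingHom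
      (MvPowerSeries.map (σ := Fin 2) (algebraMap ℤ_[p] (Algebra.adjoin ℤ_[p] ({ξ} : Set Ω))) φ) =
      MvPowerSeries.map (σ := Fin 2) (algebraMap ℤ_[p] (Algebra.adjoin ℤ_[p] ({ξ} : Set Ω))) φ := by
    ext d
    simp only [MvPowerSeries.coeff_map]
    exact congrArg Subtype.val (τ.commutes _)
  have e2 : MvPowerSeries.map (σ := Fin 2) τ.toRingHom
      (binomSer p (Algebra.adjoin ℤ_[p] ({ξ} : Set Ω)) 0 N) =
      binomSer p (Algebra.adjoin ℤ_[p] ({ξ} : Set Ω)) 0 N := by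
    ext d
    rw [MvPowerSeries.coeff_map]
    have h : τ (binomSer p (Algebra.adjoin ℤ_[p] ({ξ} : Set Ω)) 0 N d) =
        binomSer p (Algebra.adjoin ℤ_[p] ({ξ} : Set Ω)) 0 N d := by
      unfold binomSer
      split
      · exact τ.commutes _
      · exact map_zero τ
    exact congrArg Subtype.val h
  rw [map_sub, map_mul, map_mul, e2, MvPowerSeries.map_C, MvPowerSeries.map_C, map_add,
    map_one, MvPowerSeries.map_X, e1] at key
  have e3 : τ.toRingHom (algebraMap ℤ_[p] _ (gpow p γ A)) =
      algebraMap ℤ_[p] (Algebra.adjoin ℤ_[p] ({ξ} : Set Ω)) (gpow p γ A) := τ.commutes _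
  have e4 : τ.toRingHom ⟨ξ, Algebra.self_mem_adjoin_singleton ℤ_[p] ξ⟩ = ξ' := hτ
  rwa [e3, e4] at key

end
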